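/- Let E ∈ ℝ and suppose either (i) ξ ∈ ℝ with 0 < ξ² < E² and ρ := E² − ξ², or (ii) ξ = iη for some real η ≠ 0 and ρ := E² + η². Then the strict inequality |ρ + (E − ξ) · conj(E + ξ)| < √(ρ + |E − ξ|²) · √(ρ + |E + ξ|²) holds (in case (i) the left side divided by the right equals √ρ / |E| < 1, and in case (ii) it equals |E| / √ρ < 1). In particular the two normalized transverse mode vectors with overlap given by the left-hand side divided by the right-hand side are linearly independent. -/

import Mathlib

open Complex

/-- Strict Cauchy–Schwarz-type inequality for the overlap of two transverse Dirac modes: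
in the propagating case `ξ ∈ ℝ`, `0 < ξ² < E²`, `ρ = E² − ξ²`, or the evanescent case
`ξ = iη`, `η ≠ 0`, `ρ = E² + η²`, one has
`|ρ + (E − ξ) conj(E + ξ)| < √(ρ + |E − ξ|²) · √(ρ + |E + ξ|²)`. -/
theorem mode_overlap_strict_inequality
    (E : ℝ) (ξ : ℂ) (ρ : ℝ)
    (h : (∃ ξr : ℝ, ξ = (ξr : ℂ) ∧ 0 < ξr ^ 2 ∧ ξr ^ 2 < E ^ 2 ∧ ρ = E ^ 2 - ξr ^ 2)
       ∨ (∃ η : ℝ, η ≠ 0 ∧ ξ = Complex.I * (η : ℂ) ∧ ρ = E ^ 2 + η ^ 2)) :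
    ‖(ρ : ℂ) + ((E : ℂ) - ξ) * (starRingEnd ℂ) ((E : ℂ) + ξ)‖
      < Real.sqrt (ρ + ‖(E : ℂ) - ξ‖ ^ 2)
        * Real.sqrt (ρ + ‖(E : ℂ) + ξ‖ ^ 2) := by
  rcases h with ⟨ξr, hξ, h1, h2, hρ⟩ | ⟨η, hη, hξ, hρ⟩
  · subst hξ hρ
    have hρpos : (0:ℝ) < E ^ 2 - ξr ^ 2 := by linarith
    have e1 : ((E:ℂ) - ξr) = ((E - ξr : ℝ) : ℂ) := by push_cast; ring
    have e2 : ((E:ℂ) + ξr) = ((E + ξr : ℝ) : ℂ) := by push_cast; ring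
    rw [e1, e2, Complex.conj_ofReal, Complex.norm_real, Real.norm_eq_abs, Complex.norm_real, Real.norm_eq_abs]
    have eL : (((E ^ 2 - ξr ^ 2 : ℝ) : ℂ) + ((E - ξr : ℝ) : ℂ) * ((E + ξr : ℝ) : ℂ))
        = ((2 * (E ^ 2 - ξr ^ 2) : ℝ) : ℂ) := by push_cast; ring
    rw [eL, Complex.norm_real, Real.norm_eq_abs, abs_of_pos (by linarith), _root_.sq_abs, _root_.sq_abs,
      ← Real.sqrt_mul (by nlinarith)]
    rw [show 2 * (E ^ 2 - ξr ^ 2) = Real.sqrt ((2 * (E ^ 2 - ξr ^ 2)) ^ 2) from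
      (Real.sqrt_sq (by positivity)).symm]
    apply Real.sqrt_lt_sqrt (by positivity)
    nlinarith [sq_nonneg (E*ξr), sq_nonneg E, h1, h2]
  · subst hξ hρ
    have hη2 : (0:ℝ) < η ^ 2 := by positivity
    have hE2 : E ^ 2 < E ^ 2 + η ^ 2 := by linarith
    have eL : (((E ^ 2 + η ^ 2 : ℝ) : ℂ) + ((E:ℂ) - Complex.I * η) * (starRingEnd ℂ) ((E:ℂ) + Complex.I * η))
        = ((2 * E ^ 2 : ℝ) : ℂ) + ((-2 * E * η : ℝ) : ℂ) * Complex.I := by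
      simp [Complex.ext_iff, Complex.mul_re, Complex.mul_im, pow_two]
      constructor <;> ring
    rw [eL]
    have hLabs : ‖((2 * E ^ 2 : ℝ) : ℂ) + ((-2 * E * η : ℝ) : ℂ) * Complex.I‖
        = Real.sqrt ((2 * E ^ 2) ^ 2 + (-2 * E * η) ^ 2) := by
      rw [Complex.norm_def, Complex.normSq_add_mul_I]
    rw [hLabs]
    have ha : ‖(E:ℂ) - Complex.I * η‖ ^ 2 = E ^ 2 + η ^ 2 := by
      rw [Complex.sq_norm]; simp [Complex.normSq_apply]; ring
    have hb : ‖(E:ℂ) + Complex.I * η‖ ^ 2 = E ^ 2 + η ^ 2 := by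
      rw [Complex.sq_norm]; simp [Complex.normSq_apply]; ring
    rw [ha, hb, Real.mul_self_sqrt (by positivity)]
    have h2ρ : (0:ℝ) < E ^ 2 + η ^ 2 + (E ^ 2 + η ^ 2) := by positivity
    rw [show E ^ 2 + η ^ 2 + (E ^ 2 + η ^ 2)
        = Real.sqrt ((E ^ 2 + η ^ 2 + (E ^ 2 + η ^ 2)) ^ 2) from
      (Real.sqrt_sq h2ρ.le).symm]
    apply Real.sqrt_lt_sqrt (by positivity)
    nlinarith [sq_nonneg E, sq_nonneg η]
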